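/- Let f : ℝ → ℝ (extended by f(x) → −∞ as x ↓ 0 when required below) be non-decreasing and concave on (0,∞), with f(p̂_i) > f(p̂_i − ε) for every i with p̂_i > ε. Fix p̂ ∈ Δ(V) with p̂_1 ≥ … ≥ p̂_d > 0 and assume either (i) p̂_d ≤ ε < p̂_1 and lim_{x↓0} f(x) = −∞, or (ii) 0 < ε < p̂_d and Σ_{i=1}^{d−1} (f(p̂_i) − f(p̂_d + ε)) / (f(p̂_i) − f(p̂_i − ε)) ≥ 1. Set S_I = Σ_{i=1}^{I−1} (f(p̂_i) − f(p̂_I)) / (f(p̂_i) − f(p̂_i − ε)) and Î = max{I : S_I ≤ 1 and p̂_I > ε}. Define q̃ ∈ Δ(V) by q̃_i proportional to ε/(f(p̂_i) − f(p̂_i − ε)) for 1 ≤ i ≤ Î and q̃_i = 0 otherwise. Then q̃ maximizes q ↦ inf_{p ∈ N(p̂)} Σ_i q_i f(p_i) over q ∈ Δ(V): for every q ∈ Δ(V), inf_{p ∈ N(p̂)} Σ_i q_i f(p_i) ≤ inf_{p ∈ N(p̂)} Σ_i q̃_i f(p_i) (infima in the extended reals). -/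

import Mathlib

open Finset

def simplex (d : ℕ) : Set (Fin d → ℝ) := {p | (∀ i, 0 ≤ p i) ∧ ∑ i, p i = 1}

noncomputable def dTV {d : ℕ} (p q : Fin d → ℝ) : ℝ := (∑ i, |p i - q i|) / 2

def nbhd {d : ℕ} (phat : Fin d → ℝ) (ε : ℝ) : Set (Fin d → ℝ) :=
  {p | p ∈ simplex d ∧ dTV p phat ≤ ε}

/-- `f` extended to `[0,∞)` (and below) with value `−∞` for nonpositive arguments. -/
noncomputable def fext (f : ℝ → ℝ) (x : ℝ) : EReal := if x ≤ 0 then ⊥ else ((f x : ℝ) : EReal)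

/-- The extended-real objective `Σ_i q_i f(p_i)` with the convention `0 · (−∞) = 0`. -/
noncomputable def objf {d : ℕ} (f : ℝ → ℝ) (q p : Fin d → ℝ) : EReal :=
  ∑ i, ((q i : ℝ) : EReal) * fext f (p i)

private lemma ecoe_sum {α : Type*} (s : Finset α) (g : α → ℝ) :
    ((∑ i ∈ s, g i : ℝ) : EReal) = ∑ i ∈ s, ((g i : ℝ) : EReal) :=
  map_sum (⟨⟨Real.toEReal, EReal.coe_zero⟩, EReal.coe_add⟩ : ℝ →+ EReal) g s

private lemma objf_real {d : ℕ} (f : ℝ → ℝ) (q p : Fin d → ℝ) (h : ∀ i, 0 < p i) :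
    objf f q p = ((∑ i, q i * f (p i) : ℝ) : EReal) := by
  rw [objf, ecoe_sum]
  refine Finset.sum_congr rfl fun i _ => ?_
  simp only [fext, if_neg (not_le.2 (h i)), EReal.coe_mul]

/-- positive parts of deviations sum to at most `ε` in the TV ball -/
private lemma tv_pos {d : ℕ} (p phat : Fin d → ℝ) (ε : ℝ)
    (hp : ∑ i, p i = 1) (hph : ∑ i, phat i = 1) (htv : dTV p phat ≤ ε) :
    ∑ i, max (phat i - p i) 0 ≤ ε := by
  have key : ∀ x : ℝ, max x 0 = (x + |x|) / 2 := by
    intro x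
    rcases le_total x 0 with h | h
    · rw [max_eq_right h, abs_of_nonpos h]; ring
    · rw [max_eq_left h, abs_of_nonneg h]; ring
  have h1 : ∑ i, max (phat i - p i) 0 = ((∑ i, (phat i - p i)) + ∑ i, |phat i - p i|) / 2 := by
    rw [← Finset.sum_add_distrib, Finset.sum_div]
    exact Finset.sum_congr rfl fun i _ => key _
  have h2 : ∑ i, (phat i - p i) = 0 := by
    rw [Finset.sum_sub_distrib, hph, hp]; ring
  have h3 : ∑ i, |phat i - p i| = ∑ i, |p i - phat i| :=
    Finset.sum_congr rfl fun i _ => abs_sub_comm _ _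
  rw [h1, h2, h3, zero_add]
  simpa [dTV] using htv

set_option maxHeartbeats 1000000 in
/-- optimality of the generalized truncation strategy `q̃` for the
generalized one-step Decoding Game with objective `f`. -/
theorem stmt2 {d : ℕ} (hd : 0 < d) (f : ℝ → ℝ)
    (hmono : MonotoneOn f (Set.Ioi 0))
    (hconc : ConcaveOn ℝ (Set.Ioi 0) f)
    (phat : Fin d → ℝ) (ε : ℝ)
    (hmem : phat ∈ simplex d)
    (hpos : ∀ i, 0 < phat i)
    (hsort : ∀ i j : Fin d, i ≤ j → phat j ≤ phat i)
    (hgap : ∀ i : Fin d, ε < phat i → f (phat i - ε) < f (phat i))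
    (hcase :
        (phat ⟨d - 1, by omega⟩ ≤ ε ∧ ε < phat ⟨0, hd⟩ ∧
          Filter.Tendsto f (nhdsWithin 0 (Set.Ioi 0)) Filter.atBot)
      ∨ (0 < ε ∧ ε < phat ⟨d - 1, by omega⟩ ∧
          1 ≤ ∑ i ∈ univ.filter (· < (⟨d - 1, by omega⟩ : Fin d)),
            (f (phat i) - f (phat ⟨d - 1, by omega⟩ + ε))
              / (f (phat i) - f (phat i - ε))))
    (Ihat : Fin d)
    (hIhat_cond : (∑ i ∈ univ.filter (· < Ihat),
        (f (phat i) - f (phat Ihat)) / (f (phat i) - f (phat i - ε))) ≤ 1 ∧ ε < phat Ihat)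
    (hIhat_max : ∀ I : Fin d,
        ((∑ i ∈ univ.filter (· < I),
            (f (phat i) - f (phat I)) / (f (phat i) - f (phat i - ε))) ≤ 1 ∧ ε < phat I) →
        I ≤ Ihat)
    (qt : Fin d → ℝ)
    (hqt : ∀ i : Fin d,
        qt i = if i ≤ Ihat then
            (ε / (f (phat i) - f (phat i - ε)))
              / ∑ k ∈ univ.filter (· ≤ Ihat), ε / (f (phat k) - f (phat k - ε))
          else 0) :
    ∀ q ∈ simplex d,
      ⨅ p ∈ nbhd phat ε, objf f q p ≤ ⨅ p ∈ nbhd phat ε, objf f qt p := by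
  classical
  intro q hq
  obtain ⟨hq0, hq1⟩ := hq
  obtain ⟨hph0, hph1⟩ := hmem
  set z : Fin d := ⟨d - 1, by omega⟩ with hzdef
  set i₀ : Fin d := ⟨0, hd⟩ with hi₀def
  have hztop : ∀ i : Fin d, i ≤ z := by
    intro i; rw [Fin.le_def]; simp only [hzdef]; omega
  have hi₀bot : ∀ i : Fin d, i₀ ≤ i := by
    intro i; rw [Fin.le_def]; simp only [hi₀def]; omega
  have hε : 0 < ε := by
    rcases hcase with ⟨h1, _, _⟩ | ⟨h1, _, _⟩
    · exact lt_of_lt_of_le (hpos z) h1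
    · exact h1
  set Δ : Fin d → ℝ := fun i => f (phat i) - f (phat i - ε) with hΔdef
  set u : Fin d → ℝ := fun i => (Δ i)⁻¹ with hudef
  have hΔpos : ∀ i : Fin d, ε < phat i → 0 < Δ i := fun i h => sub_pos.2 (hgap i h)
  have hεK : ∀ i : Fin d, i ≤ Ihat → ε < phat i :=
    fun i h => lt_of_lt_of_le hIhat_cond.2 (hsort i Ihat h)
  set K : Finset (Fin d) := univ.filter (· ≤ Ihat) with hKdef
  have hKmem : ∀ i : Fin d, i ∈ K ↔ i ≤ Ihat := by
    intro i; simp [hKdef]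
  have hIK : Ihat ∈ K := (hKmem Ihat).2 le_rfl
  have hi₀K : i₀ ∈ K := (hKmem i₀).2 (hi₀bot Ihat)
  have hupos : ∀ i ∈ K, 0 < u i := fun i hi => inv_pos.2 (hΔpos i (hεK i ((hKmem i).1 hi)))
  set Z' : ℝ := ∑ i ∈ K, u i with hZ'def
  have hZ' : 0 < Z' := Finset.sum_pos (fun i hi => hupos i hi) ⟨Ihat, hIK⟩
  have hqtK : ∀ i ∈ K, qt i = u i / Z' := by
    intro i hi
    have hsum : ∑ k ∈ univ.filter (· ≤ Ihat), ε / (f (phat k) - f (phat k - ε)) = ε * Z' := by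
      rw [hZ'def, Finset.mul_sum]
      refine Finset.sum_congr (by rw [hKdef]) fun k hk => ?_
      simp only [hudef, hΔdef]
      rw [div_eq_mul_inv]
    rw [hqt i, if_pos ((hKmem i).1 hi), hsum]
    have hΔne : f (phat i) - f (phat i - ε) ≠ 0 :=
      ne_of_gt (hΔpos i (hεK i ((hKmem i).1 hi)))
    simp only [hudef, hΔdef]
    field_simp
  have hqt0 : ∀ i : Fin d, i ∉ K → qt i = 0 := by
    intro i hi; rw [hqt i, if_neg (fun h => hi ((hKmem i).2 h))]
  set Vs : ℝ := (∑ i ∈ K, u i * f (phat i) - 1) / Z' with hVsdef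
  have hident : ∑ i ∈ K, u i * (f (phat i) - Vs) = 1 := by
    have h1 : ∑ i ∈ K, u i * (f (phat i) - Vs) = ∑ i ∈ K, u i * f (phat i) - Z' * Vs := by
      rw [hZ'def, Finset.sum_mul, ← Finset.sum_sub_distrib]
      exact Finset.sum_congr rfl fun i _ => by ring
    have h2 : Z' * Vs = ∑ i ∈ K, u i * f (phat i) - 1 := by
      rw [hVsdef, mul_div_cancel₀ _ (ne_of_gt hZ')]
    rw [h1, h2]; ring
  have hmono' : ∀ a b : ℝ, 0 < a → a ≤ b → f a ≤ f b := by
    intro a b ha hab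
    exact hmono (Set.mem_Ioi.2 ha) (Set.mem_Ioi.2 (lt_of_lt_of_le ha hab)) hab
  have hfIhat : Vs ≤ f (phat Ihat) := by
    have hKsplit : K = insert Ihat (univ.filter (· < Ihat)) := by
      ext i
      simp only [hKdef, Finset.mem_filter, Finset.mem_univ, true_and, Finset.mem_insert]
      constructor
      · intro h; rcases lt_or_eq_of_le h with h | h
        · exact Or.inr h
        · exact Or.inl h
      · rintro (h | h)
        · exact le_of_eq h
        · exact le_of_lt h
    have hS : ∑ i ∈ K, u i * (f (phat i) - f (phat Ihat)) ≤ 1 := by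
      rw [hKsplit, Finset.sum_insert (by simp)]
      have : ∑ i ∈ univ.filter (· < Ihat), u i * (f (phat i) - f (phat Ihat))
          = ∑ i ∈ univ.filter (· < Ihat),
            (f (phat i) - f (phat Ihat)) / (f (phat i) - f (phat i - ε)) := by
        refine Finset.sum_congr rfl fun i _ => ?_
        simp only [hudef, hΔdef]
        rw [div_eq_mul_inv, mul_comm]
      rw [this]
      simpa using hIhat_cond.1
    have hdiff : ∑ i ∈ K, u i * (f (phat i) - Vs) - ∑ i ∈ K, u i * (f (phat i) - f (phat Ihat))
        = Z' * (f (phat Ihat) - Vs) := by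
      rw [hZ'def, Finset.sum_mul, ← Finset.sum_sub_distrib]
      exact Finset.sum_congr rfl fun i _ => by ring
    nlinarith [hident, hS, hZ']
  have hfK : ∀ i ∈ K, Vs ≤ f (phat i) := by
    intro i hi
    exact hfIhat.trans (hmono' _ _ (hpos Ihat) (hsort i Ihat ((hKmem i).1 hi)))
  have hg0 : ∀ i : Fin d, 0 ≤ (if i ≤ Ihat then u i * (f (phat i) - Vs) else 0) := by
    intro i
    by_cases hiI : i ≤ Ihat
    · rw [if_pos hiI]
      exact mul_nonneg (hupos i ((hKmem i).2 hiI)).le (sub_nonneg.2 (hfK i ((hKmem i).2 hiI)))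
    · rw [if_neg hiI]
  have hgsum : ∑ i : Fin d, (if i ≤ Ihat then u i * (f (phat i) - Vs) else 0) = 1 := by
    rw [← Finset.sum_filter, ← hKdef, hident]
  have hfJn : ∀ n : ℕ, ∀ j : Fin d, (j : ℕ) = n → Ihat < j → ε < phat j → f (phat j) < Vs := by
    intro n
    induction n using Nat.strong_induction_on with
    | _ n IH =>
      intro j hjn hj hjε
      by_contra hcon
      push_neg at hcon
      have hSgt : ¬ (∑ i ∈ univ.filter (· < j),
          (f (phat i) - f (phat j)) / (f (phat i) - f (phat i - ε))) ≤ 1 :=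
        fun h => (not_le.2 hj) (hIhat_max j ⟨h, hjε⟩)
      apply hSgt
      have step1 : ∀ i ∈ univ.filter (· < j),
          (f (phat i) - f (phat j)) / (f (phat i) - f (phat i - ε))
            ≤ (if i ≤ Ihat then u i * (f (phat i) - Vs) else 0) := by
        intro i hi
        have hij : i < j := by simpa using hi
        have hiε : ε < phat i := lt_of_lt_of_le hjε (hsort i j (le_of_lt hij))
        have hΔi : 0 < Δ i := hΔpos i hiε
        by_cases hiI : i ≤ Ihat
        · rw [if_pos hiI]
          have h1 : f (phat i) - f (phat j) ≤ f (phat i) - Vs := by linarith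
          have : (f (phat i) - f (phat j)) / (f (phat i) - f (phat i - ε))
              = (f (phat i) - f (phat j)) * u i := by
            simp only [hudef, hΔdef]; rw [div_eq_mul_inv]
          rw [this, mul_comm (u i)]
          exact mul_le_mul_of_nonneg_right h1 (hupos i ((hKmem i).2 hiI)).le
        · rw [if_neg hiI]
          have hfi : f (phat i) < Vs := by
            refine IH i.val ?_ i rfl (not_le.1 hiI) hiε
            rw [← hjn]
            exact hij
          apply div_nonpos_of_nonpos_of_nonneg
          · linarith
          · have : (0:ℝ) < f (phat i) - f (phat i - ε) := hΔi
            linarith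
      calc ∑ i ∈ univ.filter (· < j), (f (phat i) - f (phat j)) / (f (phat i) - f (phat i - ε))
          ≤ ∑ i ∈ univ.filter (· < j), (if i ≤ Ihat then u i * (f (phat i) - Vs) else 0) :=
            Finset.sum_le_sum step1
        _ ≤ ∑ i : Fin d, (if i ≤ Ihat then u i * (f (phat i) - Vs) else 0) :=
            Finset.sum_le_sum_of_subset_of_nonneg (Finset.filter_subset _ _)
              (fun i _ _ => hg0 i)
        _ = 1 := hgsum
  have hfJ : ∀ j : Fin d, Ihat < j → ε < phat j → f (phat j) < Vs :=
    fun j => hfJn j.val j rfl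
  have hzc : phat z ≤ ε ∨ f (phat z + ε) ≤ Vs := by
    rcases hcase with ⟨h1, _, _⟩ | ⟨_, hεz, hsum⟩
    · exact Or.inl h1
    · right
      by_contra hcon
      push_neg at hcon
      rcases Finset.eq_empty_or_nonempty (univ.filter (· < z)) with hne | hne
      · rw [hne, Finset.sum_empty] at hsum; linarith
      · have hterm : ∀ i ∈ univ.filter (· < z),
            (f (phat i) - f (phat z + ε)) / (f (phat i) - f (phat i - ε))
              < (if i ≤ Ihat then u i * (f (phat i) - Vs) else 0) := by
          intro i hi
          have hiz : i < z := by simpa using hi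
          have hiε : ε < phat i := lt_of_lt_of_le hεz (hsort i z (hztop i))
          have hΔi : 0 < Δ i := hΔpos i hiε
          by_cases hiI : i ≤ Ihat
          · rw [if_pos hiI]
            have heq : (f (phat i) - f (phat z + ε)) / (f (phat i) - f (phat i - ε))
                = (f (phat i) - f (phat z + ε)) * u i := by
              simp only [hudef, hΔdef]; rw [div_eq_mul_inv]
            rw [heq, mul_comm (u i)]
            exact mul_lt_mul_of_pos_right (by linarith) (hupos i ((hKmem i).2 hiI))
          · rw [if_neg hiI]
            have hfi : f (phat i) < Vs := hfJ i (not_le.1 hiI) hiε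
            apply div_neg_of_neg_of_pos
            · linarith
            · exact hΔi
        have := Finset.sum_lt_sum_of_nonempty hne hterm
        have h2 : ∑ i ∈ univ.filter (· < z), (if i ≤ Ihat then u i * (f (phat i) - Vs) else 0)
            ≤ 1 := by
          rw [← hgsum]
          exact Finset.sum_le_sum_of_subset_of_nonneg (Finset.filter_subset _ _)
            (fun i _ _ => hg0 i)
        linarith
  -- RHS lower bound
  have hqtnn : ∀ i : Fin d, 0 ≤ qt i := by
    intro i
    by_cases hi : i ∈ K
    · rw [hqtK i hi]
      exact div_nonneg (hupos i hi).le hZ'.le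
    · rw [hqt0 i hi]
  have hRHS : (Vs : EReal) ≤ ⨅ p ∈ nbhd phat ε, objf f qt p := by
    refine le_iInf₂ fun p hp => ?_
    obtain ⟨⟨hp0, hp1⟩, hptv⟩ := hp
    have hδ0 : ∀ i : Fin d, 0 ≤ max (phat i - p i) 0 := fun i => le_max_right _ _
    have hδsum : ∑ i, max (phat i - p i) 0 ≤ ε := tv_pos p phat ε hp1 hph1 hptv
    have hδε : ∀ i : Fin d, max (phat i - p i) 0 ≤ ε := fun i =>
      le_trans (Finset.single_le_sum (fun k _ => hδ0 k) (Finset.mem_univ i)) hδsum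
    have hpK : ∀ i ∈ K, 0 < p i := by
      intro i hi
      have h1 : phat i - p i ≤ max (phat i - p i) 0 := le_max_left _ _
      have h2 := hεK i ((hKmem i).1 hi)
      have h3 := hδε i
      linarith
    have hchord : ∀ i ∈ K,
        f (phat i) - max (phat i - p i) 0 / ε * Δ i ≤ f (p i) := by
      intro i hi
      have hiε := hεK i ((hKmem i).1 hi)
      rcases le_total (phat i) (p i) with h | h
      · have h0 : max (phat i - p i) 0 = 0 := max_eq_right (by linarith)
        have h1 : f (phat i) ≤ f (p i) := hmono' _ _ (hpos i) h
        rw [h0]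
        calc f (phat i) - 0 / ε * Δ i = f (phat i) := by ring
          _ ≤ f (p i) := h1
      · have hδi : max (phat i - p i) 0 = phat i - p i := max_eq_left (by linarith)
        have ht0 : 0 ≤ (phat i - p i) / ε := div_nonneg (by linarith) hε.le
        have ht1 : (phat i - p i) / ε ≤ 1 := (div_le_one hε).2 (by
          have := hδε i; linarith [hδi])
        have ha : phat i - ε ∈ Set.Ioi (0:ℝ) := Set.mem_Ioi.2 (by linarith)
        have hb : phat i ∈ Set.Ioi (0:ℝ) := Set.mem_Ioi.2 (hpos i)
        have hcomb := hconc.2 ha hb ht0 (by linarith : (0:ℝ) ≤ 1 - (phat i - p i) / ε)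
          (by ring)
        rw [smul_eq_mul, smul_eq_mul, smul_eq_mul, smul_eq_mul] at hcomb
        have hpt : (phat i - p i) / ε * (phat i - ε) + (1 - (phat i - p i) / ε) * phat i
            = p i := by
          field_simp
          ring
        rw [hpt] at hcomb
        rw [hδi]
        simp only [hΔdef]
        nlinarith [hcomb]
    have hsplit : objf f qt p = ((∑ i ∈ K, qt i * f (p i) : ℝ) : EReal) := by
      rw [objf, ecoe_sum]
      have h1 : ∑ i ∈ K, ((qt i * f (p i) : ℝ) : EReal)
          = ∑ i ∈ K, ((qt i : ℝ) : EReal) * fext f (p i) := by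
        refine Finset.sum_congr rfl fun i hi => ?_
        rw [fext, if_neg (not_le.2 (hpK i hi)), EReal.coe_mul]
      rw [h1]
      refine (Finset.sum_subset (Finset.subset_univ K) fun x _ hx => ?_).symm
      rw [hqt0 x hx]
      simp
    rw [hsplit, EReal.coe_le_coe_iff]
    have hterm : ∀ i ∈ K, qt i * (f (phat i) - max (phat i - p i) 0 / ε * Δ i)
        ≤ qt i * f (p i) :=
      fun i hi => mul_le_mul_of_nonneg_left (hchord i hi) (hqtnn i)
    have heq1 : ∀ i ∈ K, qt i * (f (phat i) - max (phat i - p i) 0 / ε * Δ i)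
        = u i * f (phat i) / Z' - max (phat i - p i) 0 / (ε * Z') := by
      intro i hi
      have hΔne : Δ i ≠ 0 := ne_of_gt (hΔpos i (hεK i ((hKmem i).1 hi)))
      rw [hqtK i hi]
      simp only [hudef]
      field_simp
    have hsum1 : ∑ i ∈ K, qt i * (f (phat i) - max (phat i - p i) 0 / ε * Δ i)
        = (∑ i ∈ K, u i * f (phat i)) / Z' - (∑ i ∈ K, max (phat i - p i) 0) / (ε * Z') := by
      rw [Finset.sum_congr rfl heq1, Finset.sum_sub_distrib, Finset.sum_div, Finset.sum_div]
    have hδK : ∑ i ∈ K, max (phat i - p i) 0 ≤ ε :=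
      le_trans (Finset.sum_le_sum_of_subset_of_nonneg (Finset.subset_univ K)
        (fun i _ _ => hδ0 i)) hδsum
    have hfrac : (∑ i ∈ K, max (phat i - p i) 0) / (ε * Z') ≤ 1 / Z' := by
      rw [div_le_div_iff₀ (by positivity) hZ']
      calc (∑ i ∈ K, max (phat i - p i) 0) * Z' ≤ ε * Z' :=
            mul_le_mul_of_nonneg_right hδK hZ'.le
        _ = 1 * (ε * Z') := by ring
    have hVs' : Vs = (∑ i ∈ K, u i * f (phat i)) / Z' - 1 / Z' := by
      rw [hVsdef, sub_div]
    have : Vs ≤ ∑ i ∈ K, qt i * (f (phat i) - max (phat i - p i) 0 / ε * Δ i) := by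
      rw [hsum1, hVs']
      linarith
    calc Vs ≤ ∑ i ∈ K, qt i * (f (phat i) - max (phat i - p i) 0 / ε * Δ i) := this
      _ ≤ ∑ i ∈ K, qt i * f (p i) := Finset.sum_le_sum hterm
  -- LHS: exhibit a good response
  suffices hL : ∃ p0 ∈ nbhd phat ε, objf f q p0 ≤ (Vs : EReal) by
    obtain ⟨p0, hp0, hle⟩ := hL
    exact le_trans (iInf₂_le p0 hp0) (le_trans hle hRHS)
  have hi0ε : ε < phat i₀ := by
    rcases hcase with ⟨_, h2, _⟩ | ⟨_, h2, _⟩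
    · exact h2
    · exact lt_of_lt_of_le h2 (hsort i₀ z (hi₀bot z))
  by_cases hbot : ∃ s, 0 < q s ∧ phat s ≤ ε
  · obtain ⟨s, hqs, hps⟩ := hbot
    have hsne : s ≠ i₀ := by
      intro h
      rw [h] at hps
      linarith
    set pb : Fin d → ℝ :=
      fun i => phat i + (if i = i₀ then phat s else 0) - (if i = s then phat s else 0)
      with hpbdef
    have hpbi : ∀ i : Fin d,
        pb i = phat i + (if i = i₀ then phat s else 0) - (if i = s then phat s else 0) := by
      intro i; rw [hpbdef]
    refine ⟨pb, ⟨⟨?_, ?_⟩, ?_⟩, ?_⟩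
    · intro i
      rw [hpbi i]
      by_cases h1 : i = i₀
      · have his : i ≠ s := by rw [h1]; exact fun h => hsne h.symm
        rw [if_pos h1, if_neg his]
        linarith [hph0 s, hph0 i]
      · by_cases h2 : i = s
        · rw [if_neg h1, if_pos h2, h2]
          linarith [hph0 s]
        · rw [if_neg h1, if_neg h2]
          linarith [hph0 i]
    · rw [Finset.sum_congr rfl fun i (_ : i ∈ univ) => hpbi i, Finset.sum_sub_distrib,
        Finset.sum_add_distrib, Finset.sum_ite_eq', Finset.sum_ite_eq', hph1]
      simp
    · show (∑ i, |pb i - phat i|) / 2 ≤ ε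
      have habs : ∀ i : Fin d, |pb i - phat i|
          = (if i = i₀ then phat s else 0) + (if i = s then phat s else 0) := by
        intro i
        rw [hpbi i]
        by_cases h1 : i = i₀
        · have his : i ≠ s := by rw [h1]; exact fun h => hsne h.symm
          rw [if_pos h1, if_neg his]
          rw [show phat i + phat s - 0 - phat i = phat s by ring, abs_of_nonneg (hph0 s)]
          ring
        · by_cases h2 : i = s
          · rw [if_neg h1, if_pos h2, h2]
            rw [show phat s + 0 - phat s - phat s = -(phat s) by ring, abs_neg,
              abs_of_nonneg (hph0 s)]
            ring
          · rw [if_neg h1, if_neg h2]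
            simp
      rw [Finset.sum_congr rfl fun i _ => habs i, Finset.sum_add_distrib,
        Finset.sum_ite_eq', Finset.sum_ite_eq']
      simp only [Finset.mem_univ, if_pos]
      linarith
    · have hterm : ((q s : ℝ) : EReal) * fext f (pb s) = ⊥ := by
        rw [hpbi s, if_neg hsne, if_pos rfl, show phat s + 0 - phat s = 0 by ring]
        rw [fext, if_pos le_rfl]
        exact EReal.coe_mul_bot_of_pos hqs
      rw [objf, ← Finset.add_sum_erase univ _ (Finset.mem_univ s), hterm, EReal.bot_add]
      exact bot_le
  · push_neg at hbot
    have hq'z : ∀ s, phat s ≤ ε → q s = 0 := by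
      intro s h
      rcases (hq0 s).eq_or_lt with h2 | h2
      · exact h2.symm
      · exact absurd h (not_le.2 (hbot s h2))
    have hd2 : 1 < d := by
      by_contra h
      have hd1 : d = 1 := by omega
      have hzi : z = i₀ := by
        rw [hzdef, hi₀def]
        exact Fin.ext (by simp [hd1])
      rcases hcase with ⟨h1, h2, _⟩ | ⟨_, _, h3⟩
      · rw [hzi] at h1; linarith
      · have hempty : univ.filter (· < z) = (∅ : Finset (Fin d)) := by
          refine Finset.filter_eq_empty_iff.2 fun i _ => ?_
          have : z ≤ i := by
            rw [Fin.le_def, hzdef]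
            simp [hd1]
          exact not_lt.2 this
        rw [hempty, Finset.sum_empty] at h3
        linarith
    have hzi₀ : i₀ ≠ z := by
      intro h
      have := congrArg Fin.val h
      rw [hi₀def, hzdef] at this
      simp at this
      omega
    have hsink : q z * (f (phat z + ε) - Vs) ≤ 0 := by
      rcases hzc with h | h
      · rw [hq'z z h, zero_mul]
      · exact mul_nonpos_of_nonneg_of_nonpos (hq0 z) (by linarith)
    set t' : ℝ := (∑ i, q i * (f (phat i) - Vs)) + q z * (f (phat z + ε) - f (phat z))
      with ht'def
    have hgoodj : ∃ j : Fin d, j ≠ z ∧ ε < phat j ∧ t' ≤ q j * Δ j := by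
      by_contra hcon
      push_neg at hcon
      have ht'pos : 0 < t' :=
        lt_of_le_of_lt (mul_nonneg (hq0 i₀) (hΔpos i₀ hi0ε).le) (hcon i₀ hzi₀ hi0ε)
      have step1 : t' ≤ ∑ i ∈ K.erase z, q i * (f (phat i) - Vs) := by
        have e1 : ∑ i, q i * (f (phat i) - Vs)
            = q z * (f (phat z) - Vs) + ∑ i ∈ univ.erase z, q i * (f (phat i) - Vs) :=
          (Finset.add_sum_erase _ _ (Finset.mem_univ z)).symm
        have hsub : K.erase z ⊆ univ.erase z :=
          Finset.erase_subset_erase _ (Finset.subset_univ K)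
        have e2 := Finset.sum_sdiff (f := fun i => q i * (f (phat i) - Vs)) hsub
        have hneg : ∑ i ∈ (univ.erase z) \ (K.erase z), q i * (f (phat i) - Vs) ≤ 0 := by
          apply Finset.sum_nonpos
          intro i hi
          rw [Finset.mem_sdiff, Finset.mem_erase] at hi
          obtain ⟨⟨hiz, _⟩, hiKe⟩ := hi
          have hiK : i ∉ K := fun h => hiKe (Finset.mem_erase.2 ⟨hiz, h⟩)
          rcases le_or_gt (phat i) ε with h | h
          · rw [hq'z i h, zero_mul]
          · have : Ihat < i := not_le.1 fun hc => hiK ((hKmem i).2 hc)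
            exact mul_nonpos_of_nonneg_of_nonpos (hq0 i)
              (sub_nonpos.2 (hfJ i this h).le)
        have e3 : q z * (f (phat z) - Vs) + q z * (f (phat z + ε) - f (phat z))
            = q z * (f (phat z + ε) - Vs) := by ring
        rw [ht'def]
        linarith [e1, e2, hneg, hsink, e3]
      have hqb : ∀ i ∈ K.erase z, q i < t' * u i := by
        intro i hi
        have hiz := Finset.ne_of_mem_erase hi
        have hiK := Finset.mem_of_mem_erase hi
        have hiε := hεK i ((hKmem i).1 hiK)
        have h1 := hcon i hiz hiε
        have hΔi := hΔpos i hiε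
        have : q i = (q i * Δ i) * (Δ i)⁻¹ := by field_simp
        rw [hudef, this]
        exact mul_lt_mul_of_pos_right h1 (inv_pos.2 hΔi)
      have hk1 : ∑ i ∈ K.erase z, u i * (f (phat i) - Vs) ≤ 1 := by
        rw [← hident]
        refine Finset.sum_le_sum_of_subset_of_nonneg (Finset.erase_subset _ _) ?_
        intro i hiK _
        exact mul_nonneg (hupos i hiK).le (sub_nonneg.2 (hfK i hiK))
      by_cases hex : ∃ i ∈ K.erase z, Vs < f (phat i)
      · obtain ⟨i', hi'K, hi'⟩ := hex
        have hle : ∀ i ∈ K.erase z,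
            q i * (f (phat i) - Vs) ≤ t' * u i * (f (phat i) - Vs) := by
          intro i hi
          exact mul_le_mul_of_nonneg_right (hqb i hi).le
            (sub_nonneg.2 (hfK i (Finset.mem_of_mem_erase hi)))
        have hlt : ∑ i ∈ K.erase z, q i * (f (phat i) - Vs)
            < ∑ i ∈ K.erase z, t' * u i * (f (phat i) - Vs) :=
          Finset.sum_lt_sum hle
            ⟨i', hi'K, mul_lt_mul_of_pos_right (hqb i' hi'K) (sub_pos.2 hi')⟩
        have hsum2 : ∑ i ∈ K.erase z, t' * u i * (f (phat i) - Vs)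
            = t' * ∑ i ∈ K.erase z, u i * (f (phat i) - Vs) := by
          rw [Finset.mul_sum]
          exact Finset.sum_congr rfl fun i _ => by ring
        have hmul : t' * ∑ i ∈ K.erase z, u i * (f (phat i) - Vs) ≤ t' * 1 :=
          mul_le_mul_of_nonneg_left hk1 ht'pos.le
        rw [hsum2] at hlt
        linarith
      · push_neg at hex
        have : ∑ i ∈ K.erase z, q i * (f (phat i) - Vs) ≤ 0 :=
          Finset.sum_nonpos fun i hi =>
            mul_nonpos_of_nonneg_of_nonpos (hq0 i) (sub_nonpos.2 (hex i hi))
        linarith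
    obtain ⟨j, hjz, hjε, hjt⟩ := hgoodj
    set pb : Fin d → ℝ :=
      fun i => phat i + (if i = z then ε else 0) - (if i = j then ε else 0) with hpbdef
    have hpbi : ∀ i : Fin d,
        pb i = phat i + (if i = z then ε else 0) - (if i = j then ε else 0) := by
      intro i; rw [hpbdef]
    have hpbz : pb z = phat z + ε := by
      rw [hpbi z, if_pos rfl, if_neg (fun h => hjz h.symm)]; ring
    have hpbj : pb j = phat j - ε := by
      rw [hpbi j, if_neg hjz, if_pos rfl]; ring
    have hpbo : ∀ i : Fin d, i ≠ z → i ≠ j → pb i = phat i := by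
      intro i h1 h2; rw [hpbi i, if_neg h1, if_neg h2]; ring
    have hpbpos : ∀ i : Fin d, 0 < pb i := by
      intro i
      by_cases h1 : i = z
      · rw [h1, hpbz]; linarith [hpos z]
      · by_cases h2 : i = j
        · rw [h2, hpbj]; linarith
        · rw [hpbo i h1 h2]; exact hpos i
    refine ⟨pb, ⟨⟨fun i => (hpbpos i).le, ?_⟩, ?_⟩, ?_⟩
    · rw [Finset.sum_congr rfl fun i (_ : i ∈ univ) => hpbi i, Finset.sum_sub_distrib,
        Finset.sum_add_distrib, Finset.sum_ite_eq', Finset.sum_ite_eq', hph1]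
      simp
    · show (∑ i, |pb i - phat i|) / 2 ≤ ε
      have habs : ∀ i : Fin d, |pb i - phat i|
          = (if i = z then ε else 0) + (if i = j then ε else 0) := by
        intro i
        by_cases h1 : i = z
        · have hij : i ≠ j := by rw [h1]; exact fun h => hjz h.symm
          rw [if_pos h1, if_neg hij, h1, hpbz]
          rw [show phat z + ε - phat z = ε by ring, abs_of_nonneg hε.le]
          ring
        · by_cases h2 : i = j
          · rw [if_neg h1, if_pos h2, h2, hpbj]
            rw [show phat j - ε - phat j = -ε by ring, abs_neg, abs_of_nonneg hε.le]
            ring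
          · rw [if_neg h1, if_neg h2, hpbo i h1 h2]
            simp
      rw [Finset.sum_congr rfl fun i _ => habs i, Finset.sum_add_distrib,
        Finset.sum_ite_eq', Finset.sum_ite_eq']
      simp only [Finset.mem_univ, if_pos]
      linarith
    · rw [objf_real f q pb hpbpos, EReal.coe_le_coe_iff]
      have hA : ∑ i, q i * f (pb i)
          = (∑ i, q i * f (phat i)) + q z * (f (phat z + ε) - f (phat z)) - q j * Δ j := by
        have hterm : ∀ i : Fin d, q i * f (pb i)
            = q i * f (phat i) + ((if i = z then q z * (f (phat z + ε) - f (phat z)) else 0)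
              - (if i = j then q j * Δ j else 0)) := by
          intro i
          by_cases h1 : i = z
          · have hij : i ≠ j := by rw [h1]; exact fun h => hjz h.symm
            rw [if_pos h1, if_neg hij, h1, hpbz]
            ring
          · by_cases h2 : i = j
            · rw [if_neg h1, if_pos h2, h2, hpbj]
              simp only [hΔdef]
              ring
            · rw [if_neg h1, if_neg h2, hpbo i h1 h2]
              ring
        rw [Finset.sum_congr rfl fun i (_ : i ∈ univ) => hterm i, Finset.sum_add_distrib,
          Finset.sum_sub_distrib, Finset.sum_ite_eq', Finset.sum_ite_eq']
        simp only [Finset.mem_univ, if_pos]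
        ring
      have hts : ∑ i, q i * (f (phat i) - Vs) = ∑ i, q i * f (phat i) - Vs := by
        have h1 : ∑ i, q i * (f (phat i) - Vs)
            = ∑ i, q i * f (phat i) - (∑ i, q i) * Vs := by
          rw [Finset.sum_mul, ← Finset.sum_sub_distrib]
          exact Finset.sum_congr rfl fun i _ => by ring
        rw [h1, hq1, one_mul]
      rw [ht'def] at hjt
      linarith [hA, hts, hjt]
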